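/- Every connected graph of even order is odd 3-edge-colorable. -/

import Mathlib

open scoped Classical symmDiff
open Finset

namespace OddHelp

variable {V : Type*}

/-- number of edges of `R` incident to `v` -/
noncomputable def inc (R : Finset (Sym2 V)) (v : V) : ℕ :=
  (R.filter (fun e => v ∈ e)).card

lemma inc_empty (v : V) : inc (∅ : Finset (Sym2 V)) v = 0 := by
  simp [inc]

lemma inc_union {A B : Finset (Sym2 V)} (h : Disjoint A B) (v : V) :
    inc (A ∪ B) v = inc A v + inc B v := by
  classical
  unfold inc
  rw [Finset.filter_union, Finset.card_union_of_disjoint]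
  exact Finset.disjoint_filter_filter h

lemma inc_insert {e : Sym2 V} {R : Finset (Sym2 V)} (h : e ∉ R) (v : V) :
    inc (insert e R) v = (if v ∈ e then 1 else 0) + inc R v := by
  classical
  unfold inc
  rw [Finset.filter_insert]
  split_ifs with hv
  · rw [Finset.card_insert_of_notMem (by simp [h])]
    omega
  · omega

lemma card_symmDiff (A B : Finset (Sym2 V)) :
    (A ∆ B).card % 2 = (A.card + B.card) % 2 := by
  classical
  have h1 : (A \ B).card + (A ∩ B).card = A.card := Finset.card_sdiff_add_card_inter A B
  have h2 : (B \ A).card + (B ∩ A).card = B.card := Finset.card_sdiff_add_card_inter B A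
  have h3 : (A ∆ B).card = (A \ B).card + (B \ A).card := by
    rw [symmDiff_def]
    exact Finset.card_union_of_disjoint (disjoint_sdiff_sdiff)
  have h4 : (A ∩ B).card = (B ∩ A).card := by rw [Finset.inter_comm]
  omega

lemma inc_symmDiff (A B : Finset (Sym2 V)) (v : V) :
    inc (A ∆ B) v % 2 = (inc A v + inc B v) % 2 := by
  classical
  have : (A ∆ B).filter (fun e => v ∈ e) =
      (A.filter (fun e => v ∈ e)) ∆ (B.filter (fun e => v ∈ e)) := by
    ext e
    simp only [Finset.mem_filter, Finset.mem_symmDiff]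
    tauto
  unfold inc
  rw [this]
  exact card_symmDiff _ _

lemma trail_inc_parity {G : SimpleGraph V} {u v : V} (p : G.Walk u v) (hp : p.IsTrail) (x : V) :
    inc p.edges.toFinset x % 2 =
      ((if x = u then 1 else 0) + (if x = v then 1 else 0)) % 2 := by
  classical
  induction p with
  | nil =>
    simp only [SimpleGraph.Walk.edges_nil, List.toFinset_nil, inc_empty]
    split_ifs <;> omega
  | @cons a b c h q ih =>
    rw [SimpleGraph.Walk.isTrail_cons] at hp
    have hnm : s(a, b) ∉ q.edges.toFinset := by
      simp [hp.2]
    rw [SimpleGraph.Walk.edges_cons, List.toFinset_cons, inc_insert hnm]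
    have ihq := ih hp.1
    have hab : a ≠ b := h.ne
    simp only [Sym2.mem_iff]
    split_ifs at ihq ⊢ <;> first | omega | (exfalso; subst_vars; simp_all)

lemma exists_tjoin (G : SimpleGraph V) (hc : G.Preconnected) :
    ∀ (n : ℕ) (T : Finset V), T.card = n → Even T.card →
    ∃ J : Finset (Sym2 V), (↑J : Set (Sym2 V)) ⊆ G.edgeSet ∧
      ∀ x, inc J x % 2 = if x ∈ T then 1 else 0 := by
  intro n
  induction n using Nat.strong_induction_on with
  | _ n ih =>
    intro T hcard hev
    rcases T.eq_empty_or_nonempty with rfl | ⟨u, hu⟩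
    · exact ⟨∅, by simp, fun x => by simp [inc_empty]⟩
    · obtain ⟨m, hm⟩ := hev
      have h1T : 1 ≤ T.card := Finset.card_pos.mpr ⟨u, hu⟩
      obtain ⟨v, hv⟩ : ((T.erase u).Nonempty) := Finset.card_pos.mp (by
        rw [Finset.card_erase_of_mem hu]; omega)
      have hvu : v ≠ u := Finset.ne_of_mem_erase hv
      have hvT : v ∈ T := Finset.mem_of_mem_erase hv
      set T' := (T.erase u).erase v with hT'
      have hcard' : T'.card = n - 2 := by
        rw [hT', Finset.card_erase_of_mem hv, Finset.card_erase_of_mem hu]; omega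
      obtain ⟨J', hJ'sub, hJ'⟩ := ih (n - 2) (by omega) T' hcard'
        (by rw [hcard']; exact ⟨m - 1, by omega⟩)
      obtain ⟨p⟩ := hc u v
      obtain ⟨q, hq⟩ := p.toPath
      refine ⟨J' ∆ q.edges.toFinset, ?_, ?_⟩
      · intro e he
        rw [Finset.mem_coe, Finset.mem_symmDiff] at he
        rcases he with ⟨he, -⟩ | ⟨he, -⟩
        · exact hJ'sub he
        · exact q.edges_subset_edgeSet (List.mem_toFinset.mp he)
      · intro x
        have h1 := hJ' x
        have hF := trail_inc_parity q hq.isTrail x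
        have hsd := inc_symmDiff J' q.edges.toFinset x
        have hT'mem : (x ∈ T') ↔ (x ≠ v ∧ x ≠ u ∧ x ∈ T) := by
          simp [hT', Finset.mem_erase, and_assoc]
        by_cases hxu : x = u
        · subst hxu
          have : x ∉ T' := by simp [hT'mem]
          simp only [if_neg this] at h1
          simp only [if_pos rfl, if_neg (Ne.symm hvu)] at hF
          norm_num at hF
          rw [if_pos hu]
          omega
        · by_cases hxv : x = v
          · subst hxv
            have : x ∉ T' := by simp [hT'mem]
            simp only [if_neg this] at h1
            simp only [if_neg hxu, if_pos rfl] at hF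
            norm_num at hF
            rw [if_pos hvT]
            omega
          · have hmem : (x ∈ T') ↔ (x ∈ T) := by simp [hT'mem, hxu, hxv]
            simp only [if_neg hxu, if_neg hxv] at hF
            by_cases hxT : x ∈ T
            · rw [if_pos hxT]
              rw [if_pos (hmem.mpr hxT)] at h1
              omega
            · rw [if_neg hxT]
              rw [if_neg (fun hh => hxT (hmem.mp hh))] at h1
              omega

lemma exists_max_odd [Fintype V] (G : SimpleGraph V) (hG : G.Connected)
    (hV : Even (Fintype.card V)) :
    ∃ J : Finset (Sym2 V), J ⊆ G.edgeFinset ∧ (∀ x, Odd (inc J x)) ∧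
      (SimpleGraph.fromEdgeSet (↑(G.edgeFinset \ J) : Set (Sym2 V))).IsAcyclic := by
  classical
  obtain ⟨J0, hJ0sub, hJ0⟩ := exists_tjoin G hG.preconnected (Finset.univ : Finset V).card
    Finset.univ rfl (by rwa [Finset.card_univ])
  set cand := G.edgeFinset.powerset.filter (fun J => ∀ x, Odd (inc J x)) with hcand
  have hJ0mem : J0 ∈ cand := by
    rw [hcand, Finset.mem_filter, Finset.mem_powerset]
    constructor
    · rw [← Finset.coe_subset, SimpleGraph.coe_edgeFinset]; exact hJ0sub
    · intro x
      have := hJ0 x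
      rw [if_pos (Finset.mem_univ x)] at this
      rw [Nat.odd_iff]; exact this
  obtain ⟨J, hJmem, hJmax⟩ := Finset.exists_max_image cand Finset.card ⟨J0, hJ0mem⟩
  rw [hcand, Finset.mem_filter, Finset.mem_powerset] at hJmem
  obtain ⟨hJsub, hJodd⟩ := hJmem
  refine ⟨J, hJsub, hJodd, ?_⟩
  intro v c hcyc
  set C := c.edges.toFinset with hC
  have hCsub : C ⊆ G.edgeFinset \ J := by
    intro e he
    have he2 := c.edges_subset_edgeSet (List.mem_toFinset.mp he)
    rw [SimpleGraph.edgeSet_fromEdgeSet] at he2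
    exact Finset.mem_coe.mp he2.1
  have hdisj : Disjoint J C :=
    (Finset.disjoint_of_subset_right hCsub Finset.sdiff_disjoint.symm)
  have hCcard : 1 ≤ C.card := by
    rw [hC, List.toFinset_card_of_nodup hcyc.isTrail.edges_nodup,
      SimpleGraph.Walk.length_edges]
    have := hcyc.three_le_length
    omega
  have hJ2mem : J ∪ C ∈ cand := by
    rw [hcand, Finset.mem_filter, Finset.mem_powerset]
    constructor
    · exact Finset.union_subset hJsub (hCsub.trans (Finset.sdiff_subset))
    · intro x
      rw [inc_union hdisj]
      have hCeven : inc C x % 2 = 0 := by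
        have := trail_inc_parity c hcyc.isTrail x
        rw [this]
        split_ifs <;> omega
      have := hJodd x
      rw [Nat.odd_iff] at this ⊢
      omega
  have hcard2 : (J ∪ C).card = J.card + C.card :=
    Finset.card_union_of_disjoint hdisj
  have := hJmax (J ∪ C) hJ2mem
  omega

lemma exists_penultimate [Fintype V] (R : Finset (Sym2 V)) (hne : R.Nonempty)
    (hdiag : ∀ e ∈ R, ¬ e.IsDiag)
    (hac : (SimpleGraph.fromEdgeSet (↑R : Set (Sym2 V))).IsAcyclic) :
    ∃ (w : V) (L : Finset V), L.Nonempty ∧ w ∉ L ∧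
      (∀ u ∈ L, s(w, u) ∈ R ∧ ∀ e ∈ R, u ∈ e → e = s(w, u)) ∧
      ∃ t : V, ∀ e ∈ R, w ∈ e → (∃ u ∈ L, e = s(w, u)) ∨ e = s(w, t) := by
  classical
  set H := SimpleGraph.fromEdgeSet (↑R : Set (Sym2 V)) with hH
  have hadj : ∀ {x y : V}, s(x, y) ∈ R → x ≠ y → H.Adj x y := by
    intro x y hm hxy
    rw [hH, SimpleGraph.fromEdgeSet_adj]
    exact ⟨Finset.mem_coe.mpr hm, hxy⟩
  have hedge : ∀ {x y : V}, H.Adj x y → s(x, y) ∈ R := by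
    intro x y hxy
    rw [hH, SimpleGraph.fromEdgeSet_adj] at hxy
    exact Finset.mem_coe.mp hxy.1
  have hsplit : ∀ e ∈ R, ∀ x, x ∈ e → ∃ y, e = s(x, y) ∧ H.Adj x y := by
    intro e he x hx
    obtain ⟨y, rfl⟩ := Sym2.mem_iff_exists.mp hx
    have hxy : x ≠ y := by
      intro hh
      exact hdiag _ he (by rw [Sym2.mk_isDiag_iff]; exact hh)
    exact ⟨y, rfl, hadj he hxy⟩
  set Pn := fun n => ∃ (a b : V) (p : H.Walk a b), p.IsPath ∧ p.length = n with hPn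
  have hP1 : Pn 1 := by
    obtain ⟨e, he⟩ := hne
    induction e using Sym2.ind with
    | _ x y =>
      obtain ⟨y', hey, hxy⟩ := hsplit _ he x (Sym2.mem_mk_left x y)
      refine ⟨x, y', SimpleGraph.Walk.cons hxy .nil, ?_, by simp⟩
      rw [SimpleGraph.Walk.cons_isPath_iff]
      exact ⟨SimpleGraph.Walk.IsPath.nil, by simp [hxy.ne]⟩
  have hbound : ∀ n, Pn n → n < Fintype.card V := by
    rintro n ⟨a, b, p, hp, rfl⟩
    exact hp.length_lt
  set N := Nat.findGreatest Pn (Fintype.card V) with hNdef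
  have hb1 : 1 ≤ Fintype.card V := le_of_lt (hbound 1 hP1)
  have hN : Pn N := Nat.findGreatest_spec hb1 hP1
  have hN1 : 1 ≤ N := Nat.le_findGreatest hb1 hP1
  have hmax : ∀ m, N < m → ¬ Pn m := by
    intro m hm hPm
    by_cases hmb : m ≤ Fintype.card V
    · exact Nat.findGreatest_is_greatest hm hmb hPm
    · exact hmb (le_of_lt (hbound m hPm))
  have hpu := SimpleGraph.isAcyclic_iff_path_unique.mp hac
  have hdiff : ∀ {x y : V} (p1 p2 : H.Walk x y), p1.IsPath → p2.IsPath →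
      p1.length ≠ p2.length → False := by
    intro x y p1 p2 h1 h2 hne12
    have := hpu ⟨p1, h1⟩ ⟨p2, h2⟩
    exact hne12 (congrArg SimpleGraph.Walk.length (congrArg Subtype.val this))
  obtain ⟨a, b, p, hp, hlen⟩ := hN
  cases p with
  | nil => simp at hlen; omega
  | @cons _ w _ h q =>
    have hp0 := hp
    rw [SimpleGraph.Walk.cons_isPath_iff] at hp
    rw [SimpleGraph.Walk.length_cons] at hlen
    -- (i) no extension at the endpoint a
    have hext : ∀ y, H.Adj y a → y ∉ (SimpleGraph.Walk.cons h q).support → False := by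
      intro y hy hns
      apply hmax (N + 1) (by omega)
      refine ⟨y, b, .cons hy (.cons h q), hp0.cons hns, by simp; omega⟩
    -- (ii) a is a leaf: every edge at a is s(w,a)
    have haleaf : ∀ e ∈ R, a ∈ e → e = s(w, a) := by
      intro e he hae
      obtain ⟨y, rfl, hay⟩ := hsplit e he a hae
      by_cases hyw : y = w
      · rw [hyw]; exact Sym2.eq_swap
      · exfalso
        by_cases hys : y ∈ q.support
        · refine hdiff (SimpleGraph.Walk.cons hay .nil)
            (.cons h (q.takeUntil y hys)) ?_ ?_ ?_
          · rw [SimpleGraph.Walk.cons_isPath_iff]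
            exact ⟨SimpleGraph.Walk.IsPath.nil, by simp [hay.ne]⟩
          · exact (hp.1.takeUntil hys).cons
              (fun hmem => hp.2 (q.support_takeUntil_subset hys hmem))
          · have hl0 : (q.takeUntil y hys).length ≠ 0 := by
              intro h0
              exact hyw (SimpleGraph.Walk.eq_of_length_eq_zero h0).symm
            simp only [SimpleGraph.Walk.length_cons, SimpleGraph.Walk.length_nil]
            omega
        · refine hext y hay.symm ?_
          rw [SimpleGraph.Walk.support_cons, List.mem_cons]
          push_neg
          exact ⟨hay.ne', hys⟩
    -- (iii) off-path neighbors of w are leaves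
    have hfar : ∀ x, H.Adj w x → x ∉ (SimpleGraph.Walk.cons h q).support →
        ∀ e ∈ R, x ∈ e → e = s(w, x) := by
      intro x hwx hxs e he hxe
      obtain ⟨y, rfl, hxy⟩ := hsplit e he x hxe
      by_cases hyw : y = w
      · rw [hyw]; exact Sym2.eq_swap
      exfalso
      have hxa : x ≠ a := by
        intro hh
        exact hxs (by rw [hh, SimpleGraph.Walk.support_cons]; exact List.mem_cons_self)
      have hxq : x ∉ q.support := by
        intro hh
        exact hxs (by rw [SimpleGraph.Walk.support_cons]; exact List.mem_cons_of_mem _ hh)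
      by_cases hys : y ∈ (SimpleGraph.Walk.cons h q).support
      · rw [SimpleGraph.Walk.support_cons, List.mem_cons] at hys
        rcases hys with hya | hys
        · -- y = a : edge x-a vs path x-w-a
          rw [hya] at hxy hyw
          refine hdiff (SimpleGraph.Walk.cons hxy .nil)
            (.cons hwx.symm (.cons h.symm .nil)) ?_ ?_ (by simp)
          · rw [SimpleGraph.Walk.cons_isPath_iff]
            exact ⟨SimpleGraph.Walk.IsPath.nil, by simp [hxy.ne]⟩
          · rw [SimpleGraph.Walk.cons_isPath_iff, SimpleGraph.Walk.cons_isPath_iff]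
            refine ⟨⟨SimpleGraph.Walk.IsPath.nil, ?_⟩, ?_⟩
            · simp only [SimpleGraph.Walk.support_nil, List.mem_singleton]
              intro hh
              exact hyw (hh.symm)
            · simp only [SimpleGraph.Walk.support_cons, SimpleGraph.Walk.support_nil,
                List.mem_cons, List.mem_singleton]
              push_neg
              exact ⟨hwx.ne', hxa, by simp⟩
        · refine hdiff (SimpleGraph.Walk.cons hxy .nil)
            (.cons hwx.symm (q.takeUntil y hys)) ?_ ?_ ?_
          · rw [SimpleGraph.Walk.cons_isPath_iff]
            exact ⟨SimpleGraph.Walk.IsPath.nil, by simp [hxy.ne]⟩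
          · exact (hp.1.takeUntil hys).cons
              (fun hmem => hxq (q.support_takeUntil_subset hys hmem))
          · have hl0 : (q.takeUntil y hys).length ≠ 0 := by
              intro h0
              exact hyw (SimpleGraph.Walk.eq_of_length_eq_zero h0).symm
            simp only [SimpleGraph.Walk.length_cons, SimpleGraph.Walk.length_nil]
            omega
      · -- y off path: extend path by two
        apply hmax (N + 1) (by omega)
        have hyq : y ∉ q.support := by
          intro hh
          exact hys (by rw [SimpleGraph.Walk.support_cons]; exact List.mem_cons_of_mem _ hh)
        refine ⟨y, b, .cons hxy.symm (.cons hwx.symm q), ?_, by simp; omega⟩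
        refine ((hp.1.cons hxq).cons ?_)
        rw [SimpleGraph.Walk.support_cons, List.mem_cons]
        push_neg
        exact ⟨hxy.ne', hyq⟩
    -- (iv) on-path neighbors of w other than a are unique
    have hkey : ∃ t : V, ∀ x, H.Adj w x →
        x ∈ (SimpleGraph.Walk.cons h q).support → x ≠ a → x = t := by
      cases q with
      | nil =>
        refine ⟨a, ?_⟩
        intro x hwx hxs hxa
        exfalso
        rw [SimpleGraph.Walk.support_cons, SimpleGraph.Walk.support_nil,
          List.mem_cons, List.mem_singleton] at hxs
        rcases hxs with hh | hh
        · exact hxa hh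
        · rw [hh] at hwx
          exact hwx.ne rfl
      | @cons _ t _ h' q' =>
        have hq := hp.1
        rw [SimpleGraph.Walk.cons_isPath_iff] at hq
        refine ⟨t, ?_⟩
        intro x hwx hxs hxa
        by_contra hxt
        have hxq' : x ∈ q'.support := by
          rw [SimpleGraph.Walk.support_cons, List.mem_cons,
            SimpleGraph.Walk.support_cons, List.mem_cons] at hxs
          rcases hxs with hh | hh | hh
          · exact absurd hh hxa
          · exact absurd hh hwx.ne'
          · exact hh
        refine hdiff (SimpleGraph.Walk.cons hwx .nil)
          (.cons h' (q'.takeUntil x hxq')) ?_ ?_ ?_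
        · rw [SimpleGraph.Walk.cons_isPath_iff]
          exact ⟨SimpleGraph.Walk.IsPath.nil, by simp [hwx.ne]⟩
        · exact (hq.1.takeUntil hxq').cons
            (fun hmem => hq.2 (q'.support_takeUntil_subset hxq' hmem))
        · have hl0 : (q'.takeUntil x hxq').length ≠ 0 := by
            intro h0
            exact hxt (SimpleGraph.Walk.eq_of_length_eq_zero h0).symm
          simp only [SimpleGraph.Walk.length_cons, SimpleGraph.Walk.length_nil]
          omega
    -- assemble
    set L := Finset.univ.filter
      (fun x => H.Adj w x ∧ ∀ e ∈ R, x ∈ e → e = s(w, x)) with hLdef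
    have haL : a ∈ L := by
      rw [hLdef, Finset.mem_filter]
      exact ⟨Finset.mem_univ _, h.symm, haleaf⟩
    have hwL : w ∉ L := by
      rw [hLdef, Finset.mem_filter]
      rintro ⟨-, hh, -⟩
      exact hh.ne rfl
    obtain ⟨t, ht⟩ := hkey
    refine ⟨w, L, ⟨a, haL⟩, hwL, ?_, t, ?_⟩
    · intro u hu
      rw [hLdef, Finset.mem_filter] at hu
      exact ⟨hedge hu.2.1, hu.2.2⟩
    · intro e he hwe
      obtain ⟨x, rfl, hwx⟩ := hsplit e he w hwe
      by_cases hxt : x = t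
      · right; rw [hxt]
      left
      refine ⟨x, ?_, rfl⟩
      rw [hLdef, Finset.mem_filter]
      refine ⟨Finset.mem_univ _, hwx, ?_⟩
      by_cases hxa : x = a
      · subst hxa; exact haleaf
      by_cases hxs : x ∈ (SimpleGraph.Walk.cons h q).support
      · exact absurd (ht x hwx hxs hxa) hxt
      · exact hfar x hwx hxs


lemma inc_filter_split (R : Finset (Sym2 V)) (c : Sym2 V → Bool) (v : V) :
    inc (R.filter (fun e => c e = true)) v + inc (R.filter (fun e => c e = false)) v
      = inc R v := by
  classical
  unfold inc
  have h0 := Finset.card_filter_add_card_filter_not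
    (s := R.filter (fun e => v ∈ e)) (p := fun e => c e = true)
  have e1 : (R.filter (fun e => c e = true)).filter (fun e => v ∈ e)
      = (R.filter (fun e => v ∈ e)).filter (fun e => c e = true) :=
    Finset.filter_comm _ _ _
  have e2 : (R.filter (fun e => c e = false)).filter (fun e => v ∈ e)
      = (R.filter (fun e => v ∈ e)).filter (fun a => ¬ c a = true) := by
    rw [Finset.filter_comm]
    apply Finset.filter_congr
    intro e _
    simp
  rw [e1, e2, h0]

lemma forest_two_color [Fintype V] :
    ∀ (n : ℕ) (R : Finset (Sym2 V)), R.card = n →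
    (∀ e ∈ R, ¬ e.IsDiag) →
    (SimpleGraph.fromEdgeSet (↑R : Set (Sym2 V))).IsAcyclic →
    ∃ c : Sym2 V → Bool, ∀ (b : Bool) (v : V),
      inc (R.filter (fun e => c e = b)) v = 0 ∨
        Odd (inc (R.filter (fun e => c e = b)) v) := by
  intro n
  induction n using Nat.strong_induction_on with
  | _ n ih =>
    intro R hcard hdiag hac
    rcases R.eq_empty_or_nonempty with rfl | hne
    · exact ⟨fun _ => true, fun b v => Or.inl (by simp [inc])⟩
    obtain ⟨w, L, hLne, hwL, hLprop, t, htprop⟩ := exists_penultimate R hne hdiag hac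
    set S := L.image (fun u => s(w, u)) with hSdef
    have hSsub : S ⊆ R := by
      intro e he
      rw [hSdef, Finset.mem_image] at he
      obtain ⟨u, hu, rfl⟩ := he
      exact (hLprop u hu).1
    have hSne : S.Nonempty := hLne.image _
    have hSw : ∀ e ∈ S, w ∈ e := by
      intro e he
      rw [hSdef, Finset.mem_image] at he
      obtain ⟨u, hu, rfl⟩ := he
      exact Sym2.mem_mk_left _ _
    set R' := R \ S with hR'def
    have hR'card : R'.card < n := by
      rw [hR'def, Finset.card_sdiff_of_subset hSsub]
      have h1 := Finset.card_pos.mpr hSne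
      have h2 := Finset.card_le_card hSsub
      omega
    have hdisj : Disjoint R' S := Finset.sdiff_disjoint
    have hRsplit : R = R' ∪ S := by
      rw [hR'def]; exact (Finset.sdiff_union_of_subset hSsub).symm
    have hac' : (SimpleGraph.fromEdgeSet (↑R' : Set (Sym2 V))).IsAcyclic := by
      intro v c hcyc
      have hle : SimpleGraph.fromEdgeSet (↑R' : Set (Sym2 V)) ≤
          SimpleGraph.fromEdgeSet (↑R : Set (Sym2 V)) :=
        SimpleGraph.fromEdgeSet_mono (by
          rw [hR'def]
          exact_mod_cast Finset.coe_subset.mpr Finset.sdiff_subset)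
      exact hac (c.mapLe hle) (hcyc.mapLe hle)
    obtain ⟨c', hc'⟩ := ih R'.card hR'card R' rfl
      (fun e he => hdiag e (Finset.sdiff_subset he)) hac'
    -- members of L touch no edge of R'
    have hnoU : ∀ u ∈ L, ∀ e ∈ R', u ∉ e := by
      intro u hu e he hue
      rw [hR'def, Finset.mem_sdiff] at he
      have heq := (hLprop u hu).2 e he.1 hue
      apply he.2
      rw [heq, hSdef, Finset.mem_image]
      exact ⟨u, hu, rfl⟩
    -- w has at most one incident edge in R'
    have hW1 : inc R' w ≤ 1 := by
      have hsub : R'.filter (fun e => w ∈ e) ⊆ {s(w, t)} := by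
        intro e he
        rw [Finset.mem_filter] at he
        rw [Finset.mem_singleton]
        have heR' := he.1
        rw [hR'def, Finset.mem_sdiff] at heR'
        rcases htprop e heR'.1 he.2 with ⟨u, hu, rfl⟩ | hh
        · exfalso
          apply heR'.2
          rw [hSdef, Finset.mem_image]
          exact ⟨u, hu, rfl⟩
        · exact hh
      calc inc R' w ≤ ({s(w, t)} : Finset (Sym2 V)).card := Finset.card_le_card hsub
        _ = 1 := Finset.card_singleton _
    set d : Bool → ℕ := fun b => inc (R'.filter (fun e => c' e = b)) w with hd
    have hdsum : d true + d false = inc R' w := inc_filter_split R' c' w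
    -- generic builder
    have hbuild : ∀ g : Sym2 V → Bool,
        (∀ b : Bool, d b + (S.filter (fun e => g e = b)).card = 0 ∨
          Odd (d b + (S.filter (fun e => g e = b)).card)) →
        ∃ c : Sym2 V → Bool, ∀ (b : Bool) (v : V),
          inc (R.filter (fun e => c e = b)) v = 0 ∨
            Odd (inc (R.filter (fun e => c e = b)) v) := by
      intro g hg
      refine ⟨fun e => if e ∈ S then g e else c' e, ?_⟩
      intro b v
      have hsplitR : R.filter (fun e => (if e ∈ S then g e else c' e) = b)
          = R'.filter (fun e => c' e = b) ∪ S.filter (fun e => g e = b) := by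
        rw [hRsplit, Finset.filter_union]
        congr 1
        · apply Finset.filter_congr
          intro e he
          rw [if_neg (Finset.disjoint_left.mp hdisj he)]
        · apply Finset.filter_congr
          intro e he
          rw [if_pos he]
      rw [hsplitR, inc_union (Finset.disjoint_filter_filter hdisj)]
      by_cases hvw : v = w
      · subst hvw
        have hSfull : inc (S.filter (fun e => g e = b)) v
            = (S.filter (fun e => g e = b)).card := by
          unfold inc
          congr 1
          apply Finset.filter_true_of_mem
          intro e he
          exact hSw e (Finset.filter_subset _ _ he)
        rw [hSfull]
        exact hg b
      · by_cases hvL : v ∈ L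
        · have hR'0 : inc (R'.filter (fun e => c' e = b)) v = 0 := by
            unfold inc
            rw [Finset.card_eq_zero, Finset.filter_eq_empty_iff]
            intro e he
            exact hnoU v hvL e (Finset.filter_subset _ _ he)
          rw [hR'0, zero_add]
          have h01 : inc (S.filter (fun e => g e = b)) v ≤ 1 := by
            have hsub : (S.filter (fun e => g e = b)).filter (fun e => v ∈ e)
                ⊆ {s(w, v)} := by
              intro e he
              simp only [Finset.mem_filter] at he
              obtain ⟨⟨heS, -⟩, hve⟩ := he
              rw [hSdef, Finset.mem_image] at heS
              obtain ⟨u, hu, rfl⟩ := heS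
              rw [Finset.mem_singleton]
              rw [Sym2.mem_iff] at hve
              rcases hve with rfl | rfl
              · exact absurd rfl hvw
              · rfl
            calc inc (S.filter (fun e => g e = b)) v
                ≤ ({s(w, v)} : Finset (Sym2 V)).card := Finset.card_le_card hsub
              _ = 1 := Finset.card_singleton _
          rcases Nat.le_one_iff_eq_zero_or_eq_one.mp h01 with hh | hh
          · exact Or.inl hh
          · exact Or.inr (by rw [hh]; exact odd_one)
        · have hS0 : inc (S.filter (fun e => g e = b)) v = 0 := by
            unfold inc
            rw [Finset.card_eq_zero, Finset.filter_eq_empty_iff]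
            intro e he hve
            have heS := Finset.filter_subset _ _ he
            rw [hSdef, Finset.mem_image] at heS
            obtain ⟨u, hu, rfl⟩ := heS
            rw [Sym2.mem_iff] at hve
            rcases hve with rfl | rfl
            · exact hvw rfl
            · exact hvL hu
          rw [hS0, add_zero]
          exact hc' b v
    -- counting facts for the two kinds of colorings
    obtain ⟨e0, he0S⟩ := hSne
    set k := S.card with hk
    have hk1 : 1 ≤ k := Finset.card_pos.mpr ⟨e0, he0S⟩
    have hconst : ∀ b0 b : Bool, (S.filter (fun _ => b0 = b)).card
        = if b0 = b then k else 0 := by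
      intro b0 b
      by_cases hbb : b0 = b
      · rw [if_pos hbb, Finset.filter_true_of_mem (fun _ _ => hbb)]
      · rw [if_neg hbb, Finset.card_eq_zero, Finset.filter_eq_empty_iff]
        exact fun _ _ => hbb
    have hspec1 : (S.filter (fun e => (if e = e0 then true else false) = true)).card
        = 1 := by
      have : S.filter (fun e => (if e = e0 then true else false) = true) = {e0} := by
        ext e
        simp only [Finset.mem_filter, Finset.mem_singleton]
        constructor
        · rintro ⟨heS, hb⟩
          by_contra hne'
          rw [if_neg hne'] at hb
          exact Bool.false_ne_true hb
        · rintro rfl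
          exact ⟨he0S, by rw [if_pos rfl]⟩
      rw [this, Finset.card_singleton]
    have hspec0 : (S.filter (fun e => (if e = e0 then true else false) = false)).card
        = k - 1 := by
      have : S.filter (fun e => (if e = e0 then true else false) = false)
          = S.erase e0 := by
        ext e
        simp only [Finset.mem_filter, Finset.mem_erase]
        constructor
        · rintro ⟨heS, hb⟩
          refine ⟨?_, heS⟩
          intro hh
          rw [if_pos hh] at hb
          exact (by simp at hb)
        · rintro ⟨hne', heS⟩
          exact ⟨heS, by rw [if_neg hne']⟩
      rw [this, Finset.card_erase_of_mem he0S]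
    have hcases : (d true = 0 ∧ d false = 0) ∨ (d true = 1 ∧ d false = 0) ∨
        (d true = 0 ∧ d false = 1) := by omega
    rcases Nat.even_or_odd k with hke | hko
    · -- k even
      rw [Nat.even_iff] at hke
      rcases hcases with ⟨h1, h2⟩ | ⟨h1, h2⟩ | ⟨h1, h2⟩
      · -- (0,0), k even: special edge true, rest false
        apply hbuild (fun e => if e = e0 then true else false)
        intro b
        cases b
        · rw [h2, hspec0, Nat.odd_iff]; right; omega
        · rw [h1, hspec1, Nat.odd_iff]; right; omega
      · -- (1,0), k even: all true
        apply hbuild (fun _ => true)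
        intro b
        cases b
        · rw [h2, hconst]; norm_num
        · rw [h1, hconst, if_pos rfl, Nat.odd_iff]; right; omega
      · -- (0,1), k even: all false
        apply hbuild (fun _ => false)
        intro b
        cases b
        · rw [h2, hconst, if_pos rfl, Nat.odd_iff]; right; omega
        · rw [h1, hconst]; norm_num
    · -- k odd
      rw [Nat.odd_iff] at hko
      rcases hcases with ⟨h1, h2⟩ | ⟨h1, h2⟩ | ⟨h1, h2⟩
      · -- (0,0), k odd: all true
        apply hbuild (fun _ => true)
        intro b
        cases b
        · rw [h2, hconst]; norm_num
        · rw [h1, hconst, if_pos rfl, Nat.odd_iff]; right; omega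
      · -- (1,0), k odd: all false
        apply hbuild (fun _ => false)
        intro b
        cases b
        · rw [h2, hconst, if_pos rfl, Nat.odd_iff]; right; omega
        · rw [h1, hconst, Nat.odd_iff]; norm_num
      · -- (0,1), k odd: all true
        apply hbuild (fun _ => true)
        intro b
        cases b
        · rw [h2, hconst, Nat.odd_iff]; norm_num
        · rw [h1, hconst, if_pos rfl, Nat.odd_iff]; right; omega

end OddHelp


/-- The degree of vertex `v` in the color class `i` of the edge-coloring `c` of `G`. -/
noncomputable def classDeg {V : Type*} (G : SimpleGraph V) {k : ℕ}
    (c : Sym2 V → Fin k) (i : Fin k) (v : V) : ℕ :=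
  {e : Sym2 V | e ∈ G.edgeSet ∧ c e = i ∧ v ∈ e}.ncard

/-- `G` is odd `k`-edge-colorable: there is an edge-coloring with `k` colors such that
every vertex incident to an edge of a color class has odd degree in that class. -/
def OddEdgeColorable {V : Type*} (G : SimpleGraph V) (k : ℕ) : Prop :=
  ∃ c : Sym2 V → Fin k, ∀ (i : Fin k) (v : V),
    classDeg G c i v ≠ 0 → Odd (classDeg G c i v)

/-- Every connected graph of even order is odd 3-edge-colorable. -/
theorem stmt2 {V : Type*} [Fintype V] (G : SimpleGraph V)
    (hG : G.Connected) (hV : Even (Fintype.card V)) :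
    OddEdgeColorable G 3 := by
  classical
  obtain ⟨J, hJsub, hJodd, hJac⟩ := OddHelp.exists_max_odd G hG hV
  set R := G.edgeFinset \ J with hRdef
  have hdiag : ∀ e ∈ R, ¬ e.IsDiag := fun e he =>
    G.not_isDiag_of_mem_edgeSet (SimpleGraph.mem_edgeFinset.mp (Finset.sdiff_subset he))
  obtain ⟨cB, hcB⟩ := OddHelp.forest_two_color R.card R rfl hdiag hJac
  set c : Sym2 V → Fin 3 :=
    fun e => if e ∈ J then 2 else if cB e = true then 1 else 0 with hcdef
  have hclass : ∀ (i : Fin 3) (v : V),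
      classDeg G c i v = OddHelp.inc (G.edgeFinset.filter (fun e => c e = i)) v := by
    intro i v
    rw [classDeg, OddHelp.inc, ← Set.ncard_coe_finset]
    congr 1
    ext e
    simp only [Finset.coe_filter, Set.mem_setOf_eq, Finset.mem_filter,
      SimpleGraph.mem_edgeFinset, and_assoc]
  have hfilter2 : G.edgeFinset.filter (fun e => c e = 2) = J := by
    ext e
    simp only [Finset.mem_filter, SimpleGraph.mem_edgeFinset]
    constructor
    · rintro ⟨he, hc2⟩
      by_contra heJ
      rw [hcdef] at hc2
      simp only [if_neg heJ] at hc2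
      split_ifs at hc2 <;> exact absurd hc2 (by decide)
    · intro heJ
      refine ⟨SimpleGraph.mem_edgeFinset.mp (hJsub heJ), ?_⟩
      rw [hcdef]
      simp only [if_pos heJ]
  have hfilter1 : G.edgeFinset.filter (fun e => c e = 1)
      = R.filter (fun e => cB e = true) := by
    ext e
    simp only [Finset.mem_filter, SimpleGraph.mem_edgeFinset, hRdef,
      Finset.mem_sdiff]
    constructor
    · rintro ⟨he, hc1⟩
      rw [hcdef] at hc1
      by_cases heJ : e ∈ J
      · simp only [if_pos heJ] at hc1
        exact absurd hc1 (by decide)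
      · simp only [if_neg heJ] at hc1
        split_ifs at hc1 with hcb
        · exact ⟨⟨he, heJ⟩, hcb⟩
        · exact absurd hc1 (by decide)
    · rintro ⟨⟨he, heJ⟩, hcb⟩
      refine ⟨he, ?_⟩
      rw [hcdef]
      simp only [if_neg heJ, if_pos hcb]
  have hfilter0 : G.edgeFinset.filter (fun e => c e = 0)
      = R.filter (fun e => cB e = false) := by
    ext e
    simp only [Finset.mem_filter, SimpleGraph.mem_edgeFinset, hRdef,
      Finset.mem_sdiff]
    constructor
    · rintro ⟨he, hc1⟩
      rw [hcdef] at hc1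
      by_cases heJ : e ∈ J
      · simp only [if_pos heJ] at hc1
        exact absurd hc1 (by decide)
      · simp only [if_neg heJ] at hc1
        split_ifs at hc1 with hcb
        · exact absurd hc1 (by decide)
        · exact ⟨⟨he, heJ⟩, by simp at hcb; exact hcb⟩
    · rintro ⟨⟨he, heJ⟩, hcb⟩
      refine ⟨he, ?_⟩
      rw [hcdef]
      simp only [if_neg heJ]
      rw [if_neg (by simp [hcb])]
  refine ⟨c, ?_⟩
  intro i v hne
  rw [hclass] at hne ⊢
  have hval : ∀ j : Fin 3, j = 0 ∨ j = 1 ∨ j = 2 := by decide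
  rcases hval i with rfl | rfl | rfl
  · rw [hfilter0] at hne ⊢
    rcases hcB false v with hh | hh
    · exact absurd hh hne
    · exact hh
  · rw [hfilter1] at hne ⊢
    rcases hcB true v with hh | hh
    · exact absurd hh hne
    · exact hh
  · rw [hfilter2]
    exact hJodd v
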